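/- Let f : ℝ → ℝ be convex on [0,1], differentiable on [0,1], and have strictly positive derivative on [0,1]. Then every f-optimal distribution is the one-hot distribution δ_0 concentrated on the most probable sample: p_f(0) = 1 and p_f(i) = 0 for all i > 0. -/

import Mathlib

/-- The data distribution on ℕ: strictly decreasing, positive, and summing to 1. -/
def IsDataDist (p : ℕ → ℝ) : Prop :=
  (∀ i j : ℕ, i < j → p i > p j) ∧ (∀ i, p i > 0) ∧ (∑' i, p i = 1)

/-- A distribution on ℕ: nonnegative and summing to 1. -/
def IsDist (q : ℕ → ℝ) : Prop :=
  (∀ i, 0 ≤ q i) ∧ (∑' i, q i = 1)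

/-- The loss of distribution `q` under criterion `f`, w.r.t. data distribution `pdata`. -/
noncomputable def lossF (pdata : ℕ → ℝ) (f : ℝ → ℝ) (q : ℕ → ℝ) : ℝ :=
  -∑' i, pdata i * f (q i)

/-- `p` is `f`-optimal: it is a distribution minimizing the loss over all distributions. -/
def IsOptimal (pdata : ℕ → ℝ) (f : ℝ → ℝ) (p : ℕ → ℝ) : Prop :=
  IsDist p ∧ ∀ q : ℕ → ℝ, IsDist q → lossF pdata f p ≤ lossF pdata f q


lemma summable_of_tsum_one {q : ℕ → ℝ} (h : ∑' i, q i = 1) : Summable q := by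
  by_contra hs
  rw [tsum_eq_zero_of_not_summable hs] at h
  exact one_ne_zero h.symm

lemma dist_le_one {q : ℕ → ℝ} (hq : (∀ i, 0 ≤ q i) ∧ (∑' i, q i = 1)) (i : ℕ) : q i ≤ 1 := by
  obtain ⟨hn, hs⟩ := hq
  have hsq := summable_of_tsum_one hs
  calc q i ≤ ∑' j, q j := Summable.le_tsum hsq i (fun j _ => hn j)
  _ = 1 := hs

/-- Paper's Theorem 2 (uniqueness direction): for an increasing convex `f` on `[0,1]`
that is differentiable with strictly positive derivative on `[0,1]`, every `f`-optimal
distribution is the one-hot distribution concentrated on the most probable sample. -/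
theorem optimal_one_hot
    (pdata : ℕ → ℝ) (hdata : IsDataDist pdata)
    (f : ℝ → ℝ)
    (hconv : ConvexOn ℝ (Set.Icc (0 : ℝ) 1) f)
    (hdiff : DifferentiableOn ℝ f (Set.Icc (0 : ℝ) 1))
    (hderiv : ∀ x ∈ Set.Icc (0 : ℝ) 1, 0 < derivWithin f (Set.Icc (0 : ℝ) 1) x)
    (p : ℕ → ℝ) (hp : IsOptimal pdata f p) :
    p 0 = 1 ∧ ∀ i : ℕ, 0 < i → p i = 0 := by
  obtain ⟨hdec, hpos, hsum⟩ := hdata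
  obtain ⟨⟨hpn, hps⟩, hopt⟩ := hp
  have hpdsum : Summable pdata := summable_of_tsum_one hsum
  -- f is strictly monotone on [0,1]
  have hmono : StrictMonoOn f (Set.Icc (0 : ℝ) 1) := by
    apply strictMonoOn_of_hasDerivWithinAt_pos (convex_Icc 0 1) hdiff.continuousOn
      (f' := fun x => derivWithin f (Set.Icc (0 : ℝ) 1) x)
    · intro x hx
      exact ((hdiff x (interior_subset hx)).hasDerivWithinAt).mono interior_subset
    · intro x hx
      exact hderiv x (interior_subset hx)
  have h01 : (0 : ℝ) ∈ Set.Icc (0 : ℝ) 1 := ⟨le_refl 0, zero_le_one⟩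
  have h11 : (1 : ℝ) ∈ Set.Icc (0 : ℝ) 1 := ⟨zero_le_one, le_refl 1⟩
  have hf01 : f 0 < f 1 := hmono h01 h11 zero_lt_one
  -- chord bound
  have chord : ∀ x ∈ Set.Icc (0 : ℝ) 1, f x ≤ f 0 + x * (f 1 - f 0) := by
    intro x hx
    have := hconv.2 h01 h11 (show (0:ℝ) ≤ 1 - x by linarith [hx.2]) hx.1
      (show (1 - x) + x = 1 by ring)
    simp only [smul_eq_mul] at this
    calc f x = f ((1 - x) * 0 + x * 1) := by ring_nf
    _ ≤ (1 - x) * f 0 + x * f 1 := this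
    _ = f 0 + x * (f 1 - f 0) := by ring
  -- the one-hot distribution
  set δ : ℕ → ℝ := fun i => if i = 0 then (1 : ℝ) else 0 with hδdef
  have hδdist : IsDist δ := by
    constructor
    · intro i; by_cases h : i = 0 <;> simp [hδdef, h]
    · simp [hδdef, tsum_ite_eq]
  -- compute the loss of δ
  have hSδ : ∑' i, pdata i * f (δ i) = f 0 + pdata 0 * (f 1 - f 0) := by
    have heq : (fun i => pdata i * f (δ i)) =
        fun i => pdata i * f 0 + (if i = 0 then pdata 0 * (f 1 - f 0) else 0) := by
      funext i
      by_cases h : i = 0 <;> simp [hδdef, h] <;> ring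
    rw [heq, Summable.tsum_add (hpdsum.mul_right _) (hasSum_ite_eq 0 _).summable,
      tsum_mul_right, hsum, tsum_ite_eq]
    ring
  -- key strict inequality: any distribution with mass off 0 has strictly larger loss
  have key : ∀ q : ℕ → ℝ, IsDist q → ∀ j : ℕ, 0 < j → 0 < q j →
      lossF pdata f δ < lossF pdata f q := by
    intro q hq j hj hqj
    obtain ⟨hqn, hqs⟩ := hq
    have hqsum : Summable q := summable_of_tsum_one hqs
    have hqle : ∀ i, q i ≤ 1 := fun i => dist_le_one ⟨hqn, hqs⟩ i
    have hqmem : ∀ i, q i ∈ Set.Icc (0 : ℝ) 1 := fun i => ⟨hqn i, hqle i⟩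
    -- summability of pdata i * q i and domination
    have hdom : ∀ i, pdata i * q i ≤ pdata 0 * q i := by
      intro i
      rcases Nat.eq_zero_or_pos i with h | h
      · rw [h]
      · exact mul_le_mul_of_nonneg_right (le_of_lt (hdec 0 i h)) (hqn i)
    have hpq_nonneg : ∀ i, 0 ≤ pdata i * q i :=
      fun i => mul_nonneg (le_of_lt (hpos i)) (hqn i)
    have hgsum : Summable (fun i => pdata 0 * q i) := hqsum.mul_left _
    have hpqsum : Summable (fun i => pdata i * q i) :=
      Summable.of_nonneg_of_le hpq_nonneg hdom hgsum
    have hstrict : ∑' i, pdata i * q i < pdata 0 := by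
      have hlt : pdata j * q j < pdata 0 * q j :=
        mul_lt_mul_of_pos_right (hdec 0 j hj) hqj
      calc ∑' i, pdata i * q i < ∑' i, pdata 0 * q i :=
            Summable.tsum_lt_tsum_of_nonneg hpq_nonneg hdom hlt hgsum
      _ = pdata 0 * ∑' i, q i := tsum_mul_left
      _ = pdata 0 := by rw [hqs, mul_one]
    -- summability of pdata i * f(q i)
    have hfb : ∀ i, f 0 ≤ f (q i) ∧ f (q i) ≤ f 1 := by
      intro i
      exact ⟨hmono.monotoneOn h01 (hqmem i) (hqn i),
        hmono.monotoneOn (hqmem i) h11 (hqle i)⟩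
    have hSqsum : Summable (fun i => pdata i * f (q i)) := by
      apply Summable.of_norm_bounded (g := fun i => pdata i * max |f 0| |f 1|)
        (hpdsum.mul_right _)
      intro i
      rw [norm_mul, Real.norm_eq_abs, Real.norm_eq_abs,
        abs_of_pos (hpos i)]
      exact mul_le_mul_of_nonneg_left
        (abs_le_max_abs_abs (hfb i).1 (hfb i).2) (le_of_lt (hpos i))
    -- chord bound termwise
    have hub : Summable (fun i => pdata i * (f 0 + q i * (f 1 - f 0))) := by
      have : (fun i => pdata i * (f 0 + q i * (f 1 - f 0))) =
          fun i => pdata i * f 0 + pdata i * q i * (f 1 - f 0) := by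
        funext i; ring
      rw [this]
      exact Summable.add (hpdsum.mul_right _) (hpqsum.mul_right _)
    have hSq : ∑' i, pdata i * f (q i) < f 0 + pdata 0 * (f 1 - f 0) := by
      calc ∑' i, pdata i * f (q i)
          ≤ ∑' i, pdata i * (f 0 + q i * (f 1 - f 0)) := by
            apply Summable.tsum_le_tsum _ hSqsum hub
            intro i
            exact mul_le_mul_of_nonneg_left (chord (q i) (hqmem i)) (le_of_lt (hpos i))
      _ = ∑' i, (pdata i * f 0 + pdata i * q i * (f 1 - f 0)) := by
            congr 1; funext i; ring
      _ = (∑' i, pdata i * f 0) + ∑' i, pdata i * q i * (f 1 - f 0) :=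
            Summable.tsum_add (hpdsum.mul_right _) (hpqsum.mul_right _)
      _ = f 0 + (∑' i, pdata i * q i) * (f 1 - f 0) := by
            rw [tsum_mul_right, hsum, one_mul, tsum_mul_right]
      _ < f 0 + pdata 0 * (f 1 - f 0) := by
            have := sub_pos.mpr hf01
            nlinarith
    unfold lossF
    rw [hSδ]
    linarith
  -- conclude
  have h2 : ∀ i : ℕ, 0 < i → p i = 0 := by
    intro i hi
    by_contra h
    have hpi : 0 < p i := lt_of_le_of_ne (hpn i) (Ne.symm h)
    have h1 := key p ⟨hpn, hps⟩ i hi hpi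
    have h2 := hopt δ hδdist
    linarith
  refine ⟨?_, h2⟩
  have : ∑' i, p i = p 0 :=
    tsum_eq_single 0 (fun j hj => h2 j (Nat.pos_of_ne_zero hj))
  rw [← this, hps]
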